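/- There exists a 4-edge-colouring of the complete graph K_10 containing no monochromatic copy of P_5; consequently R_4(P_5) ≥ 11. -/

import Mathlib

/-- `G` contains the path on `t` vertices as a subgraph. -/
def ContainsPath (t : ℕ) {V : Type*} (G : SimpleGraph V) : Prop :=
  ∃ f : Fin t → V, Function.Injective f ∧
    ∀ i j : Fin t, (i : ℕ) + 1 = (j : ℕ) → G.Adj (f i) (f j)

/-- The graph on `Fin n` formed by the edges of colour `c`. -/
def colorClass {n r : ℕ} (C : Sym2 (Fin n) → Fin r) (c : Fin r) : SimpleGraph (Fin n) :=
  SimpleGraph.fromEdgeSet {e | C e = c}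

/-- The colouring `C` contains a monochromatic path on `t` vertices. -/
def HasMonoPath (t : ℕ) {n r : ℕ} (C : Sym2 (Fin n) → Fin r) : Prop :=
  ∃ c : Fin r, ContainsPath t (colorClass C c)

/-- The `r`-coloured Ramsey number of the path on `t` vertices. -/
noncomputable def pathRamsey (r t : ℕ) : ℕ :=
  sInf {n | ∀ C : Sym2 (Fin n) → Fin r, HasMonoPath t C}

/-- The Turán number of the path on `t` vertices. -/
noncomputable def exPath (t n : ℕ) : ℕ :=
  sSup {m | ∃ G : SimpleGraph (Fin n), ¬ ContainsPath t G ∧ G.edgeSet.ncard = m}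

/-! ### Lower bound construction on `K₁₀` -/

/-- Four partitions of `Fin 10` into blocks of size at most 4, covering all pairs. -/
def gfun : Fin 4 → Fin 10 → Fin 3 :=
  ![![0,2,2,0,0,0,1,1,1,1],
    ![0,1,0,1,2,0,2,1,0,1],
    ![0,1,2,2,1,0,2,0,1,0],
    ![0,0,1,2,1,0,0,1,2,1]]

/-- Colour of a pair: the first partition putting both in one block. -/
def colFun (a b : Fin 10) : Fin 4 :=
  if gfun 0 a = gfun 0 b then 0
  else if gfun 1 a = gfun 1 b then 1
  else if gfun 2 a = gfun 2 b then 2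
  else 3

lemma colFun_symm : ∀ a b : Fin 10, colFun a b = colFun b a := by decide

/-- The colouring of `K₁₀`. -/
def C10 : Sym2 (Fin 10) → Fin 4 :=
  Sym2.lift ⟨colFun, fun a b => colFun_symm a b⟩

lemma colFun_block : ∀ a b : Fin 10, a ≠ b → gfun (colFun a b) a = gfun (colFun a b) b := by
  decide

lemma block_card : ∀ (c : Fin 4) (x : Fin 3),
    (Finset.univ.filter fun v : Fin 10 => gfun c v = x).card ≤ 4 := by decide

lemma C10_noMono : ¬ HasMonoPath 5 C10 := by
  rintro ⟨c, f, hinj, hadj⟩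
  have key : ∀ i j : Fin 5, (i : ℕ) + 1 = (j : ℕ) → gfun c (f i) = gfun c (f j) := by
    intro i j hij
    have h := hadj i j hij
    rw [colorClass, SimpleGraph.fromEdgeSet_adj] at h
    obtain ⟨hc, hne⟩ := h
    have hc' : colFun (f i) (f j) = c := hc
    have := colFun_block (f i) (f j) hne
    rwa [hc'] at this
  have h1 := key 0 1 (by decide)
  have h2 := key 1 2 (by decide)
  have h3 := key 2 3 (by decide)
  have h4 := key 3 4 (by decide)
  have hmem : ∀ i : Fin 5, f i ∈ Finset.univ.filter fun v : Fin 10 => gfun c v = gfun c (f 0) := by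
    intro i
    refine Finset.mem_filter.mpr ⟨Finset.mem_univ _, ?_⟩
    fin_cases i
    · rfl
    · exact h1.symm
    · exact (h1.trans h2).symm
    · exact ((h1.trans h2).trans h3).symm
    · exact (((h1.trans h2).trans h3).trans h4).symm
  have hcard : (Finset.univ : Finset (Fin 5)).card ≤
      (Finset.univ.filter fun v : Fin 10 => gfun c v = gfun c (f 0)).card :=
    Finset.card_le_card_of_injOn f (fun i _ => hmem i) hinj.injOn
  have := block_card c (gfun c (f 0))
  simp [Finset.card_univ] at hcard
  omega

/-! ### Upper bound: every 4-colouring of `K₂₆` has a monochromatic `P₅` -/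

lemma edge_bound {N : ℕ} (G : SimpleGraph (Fin N)) [DecidableRel G.Adj]
    (hG : ¬ ContainsPath 5 G) (S : Finset (Fin N)) :
    ((S ×ˢ S).filter fun p => G.Adj p.1 p.2).card ≤ 6 * S.card := by
  classical
  induction S using Finset.strongInduction with
  | _ S ih =>
  rcases S.eq_empty_or_nonempty with rfl | ⟨v0, hv0⟩
  · simp
  · -- paths inside S
    set Ppred : ℕ → Prop := fun k => ∃ f : Fin k → Fin N, Function.Injective f ∧
      (∀ i, f i ∈ S) ∧ ∀ i j : Fin k, (i : ℕ) + 1 = (j : ℕ) → G.Adj (f i) (f j) with hPdef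
    have hP1 : Ppred 1 := by
      refine ⟨fun _ => v0, fun a b _ => Subsingleton.elim a b, fun _ => hv0, ?_⟩
      intro i j hij
      have hi := i.isLt; have hj := j.isLt
      omega
    have hP5 : ¬ Ppred 5 := by
      rintro ⟨f, h1, _, h3⟩
      exact hG ⟨f, h1, h3⟩
    set T := (Finset.range 5).filter Ppred with hT
    have hTne : T.Nonempty :=
      ⟨1, Finset.mem_filter.mpr ⟨Finset.mem_range.mpr (by norm_num), hP1⟩⟩
    obtain ⟨k, hkmem, hkmax⟩ : ∃ k, k ∈ T ∧ ∀ m ∈ T, m ≤ k :=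
      ⟨T.max' hTne, T.max'_mem hTne, fun m hm => T.le_max' m hm⟩
    have hk5 : k < 5 := Finset.mem_range.mp (Finset.mem_filter.mp hkmem).1
    have hPk : Ppred k := (Finset.mem_filter.mp hkmem).2
    have hk1 : 1 ≤ k := hkmax 1 (Finset.mem_filter.mpr ⟨by norm_num, hP1⟩)
    obtain ⟨f, hfinj, hfS, hfadj⟩ := hPk
    set v := f ⟨k - 1, by omega⟩ with hv
    have hvS : v ∈ S := hfS _
    have hnbr : ∀ w ∈ S, G.Adj v w → ∃ i, f i = w := by
      intro w hwS hadjvw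
      by_contra hwr
      push_neg at hwr
      set g : Fin (k + 1) → Fin N := fun i => if h : (i : ℕ) < k then f ⟨i, h⟩ else w with hg
      have hgP : Ppred (k + 1) := by
        refine ⟨g, ?_, ?_, ?_⟩
        · intro a b hab
          simp only [hg] at hab
          by_cases ha : (a : ℕ) < k <;> by_cases hb : (b : ℕ) < k
          · rw [dif_pos ha, dif_pos hb] at hab
            have h2 := hfinj hab
            have := congrArg Fin.val h2
            exact Fin.ext (by simpa using this)
          · rw [dif_pos ha, dif_neg hb] at hab
            exact absurd hab (hwr _)
          · rw [dif_neg ha, dif_pos hb] at hab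
            exact absurd hab.symm (hwr _)
          · have := a.isLt; have := b.isLt
            exact Fin.ext (by omega)
        · intro i
          simp only [hg]
          split
          · exact hfS _
          · exact hwS
        · intro i j hij
          have hik : (i : ℕ) < k := by have := j.isLt; omega
          by_cases hjk : (j : ℕ) < k
          · simp only [hg, dif_pos hik, dif_pos hjk]
            exact hfadj _ _ hij
          · have hjv : (j : ℕ) = k := by have := j.isLt; omega
            have hiv : (i : ℕ) = k - 1 := by omega
            simp only [hg, dif_pos hik, dif_neg hjk]
            have hfe : f ⟨(i : ℕ), hik⟩ = v := by
              rw [hv]; congr 1; exact Fin.ext (by simpa using hiv)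
            rw [hfe]; exact hadjvw
      have hne5 : k + 1 ≠ 5 := fun h => hP5 (h ▸ hgP)
      have hmem5 : k + 1 ∈ T :=
        Finset.mem_filter.mpr ⟨Finset.mem_range.mpr (by omega), hgP⟩
      have := hkmax _ hmem5
      omega
    set nb := S.filter (fun w => G.Adj v w) with hnbdef
    have hnbcard : nb.card ≤ 3 := by
      have hsub : nb ⊆ (Finset.univ.image f).erase v := by
        intro w hw
        obtain ⟨hwS, hadjvw⟩ := Finset.mem_filter.mp hw
        refine Finset.mem_erase.mpr ⟨hadjvw.ne', ?_⟩
        obtain ⟨i, hi⟩ := hnbr w hwS hadjvw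
        exact Finset.mem_image.mpr ⟨i, Finset.mem_univ _, hi⟩
      have hvmem : v ∈ Finset.univ.image f :=
        Finset.mem_image.mpr ⟨_, Finset.mem_univ _, rfl⟩
      have h1 := Finset.card_le_card hsub
      rw [Finset.card_erase_of_mem hvmem,
        Finset.card_image_of_injective _ hfinj, Finset.card_univ, Fintype.card_fin] at h1
      omega
    set S' := S.erase v with hS'
    have hA' := ih S' (Finset.erase_ssubset hvS)
    set A := (S ×ˢ S).filter (fun p => G.Adj p.1 p.2) with hA
    have split1 := Finset.card_filter_add_card_filter_not
      (s := A) (p := fun p => p.1 = v)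
    have split2 := Finset.card_filter_add_card_filter_not
      (s := A.filter fun p => ¬ p.1 = v) (p := fun p => p.2 = v)
    have e1 : (A.filter (fun p => p.1 = v)).card ≤ nb.card := by
      apply Finset.card_le_card_of_injOn (fun p => p.2)
      · intro p hp
        simp only [hA, Finset.mem_coe, Finset.mem_filter, Finset.mem_product] at hp
        obtain ⟨⟨⟨h1, h2⟩, h3⟩, h4⟩ := hp
        refine Finset.mem_filter.mpr ⟨h2, ?_⟩
        rw [← h4]; exact h3
      · intro p hp q hq hpq
        have hp1 := (Finset.mem_filter.mp hp).2
        have hq1 := (Finset.mem_filter.mp hq).2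
        exact Prod.ext (hp1.trans hq1.symm) hpq
    have e2 : ((A.filter fun p => ¬ p.1 = v).filter fun p => p.2 = v).card ≤ nb.card := by
      apply Finset.card_le_card_of_injOn (fun p => p.1)
      · intro p hp
        simp only [hA, Finset.mem_coe, Finset.mem_filter, Finset.mem_product] at hp
        obtain ⟨⟨⟨⟨h1, h2⟩, h3⟩, _⟩, h5⟩ := hp
        refine Finset.mem_filter.mpr ⟨h1, ?_⟩
        rw [← h5]; exact h3.symm
      · intro p hp q hq hpq
        have hp1 := (Finset.mem_filter.mp hp).2
        have hq1 := (Finset.mem_filter.mp hq).2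
        exact Prod.ext hpq (hp1.trans hq1.symm)
    have e3 : ((A.filter fun p => ¬ p.1 = v).filter fun p => ¬ p.2 = v) =
        (S' ×ˢ S').filter (fun p => G.Adj p.1 p.2) := by
      ext p
      simp only [hA, hS', Finset.mem_filter, Finset.mem_product, Finset.mem_erase]
      tauto
    have e3c : ((A.filter fun p => ¬ p.1 = v).filter fun p => ¬ p.2 = v).card =
        ((S' ×ˢ S').filter (fun p => G.Adj p.1 p.2)).card := by rw [e3]
    have hScard : S'.card = S.card - 1 := Finset.card_erase_of_mem hvS
    have hS1 : 1 ≤ S.card := Finset.card_pos.mpr ⟨v0, hv0⟩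
    omega

lemma ramsey26 : ∀ C : Sym2 (Fin 26) → Fin 4, HasMonoPath 5 C := by
  intro C
  by_contra h
  simp only [HasMonoPath, not_exists] at h
  haveI : ∀ (c : Fin 4), DecidableRel (colorClass C c).Adj := fun c => Classical.decRel _
  set D := (Finset.univ : Finset (Fin 26)).offDiag with hD
  have hDcard : D.card = 650 := by
    rw [hD, Finset.offDiag_card]
    simp [Finset.card_univ]
  have hsub : D ⊆ Finset.univ.biUnion
      (fun c : Fin 4 => D.filter (fun p => (colorClass C c).Adj p.1 p.2)) := by
    intro p hp
    have hne : p.1 ≠ p.2 := (Finset.mem_offDiag.mp hp).2.2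
    refine Finset.mem_biUnion.mpr ⟨C (s(p.1, p.2)), Finset.mem_univ _, ?_⟩
    refine Finset.mem_filter.mpr ⟨hp, ?_⟩
    rw [colorClass, SimpleGraph.fromEdgeSet_adj]
    exact ⟨rfl, hne⟩
  have hbound : ∀ c : Fin 4,
      (D.filter (fun p => (colorClass C c).Adj p.1 p.2)).card ≤ 156 := by
    intro c
    have hb := edge_bound (colorClass C c) (h c) Finset.univ
    have hsub2 : D.filter (fun p => (colorClass C c).Adj p.1 p.2) ⊆
        ((Finset.univ ×ˢ Finset.univ).filter fun p => (colorClass C c).Adj p.1 p.2) := by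
      intro p hp
      obtain ⟨hp1, hp2⟩ := Finset.mem_filter.mp hp
      exact Finset.mem_filter.mpr ⟨by simp, hp2⟩
    calc (D.filter (fun p => (colorClass C c).Adj p.1 p.2)).card
        ≤ ((Finset.univ ×ˢ Finset.univ).filter
            fun p => (colorClass C c).Adj p.1 p.2).card := Finset.card_le_card hsub2
      _ ≤ 6 * (Finset.univ : Finset (Fin 26)).card := hb
      _ = 156 := by simp [Finset.card_univ]
  have hle : D.card ≤ ∑ c : Fin 4,
      (D.filter (fun p => (colorClass C c).Adj p.1 p.2)).card :=
    le_trans (Finset.card_le_card hsub) Finset.card_biUnion_le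
  have hsum : ∑ c : Fin 4,
      (D.filter (fun p => (colorClass C c).Adj p.1 p.2)).card ≤ 624 := by
    calc ∑ c : Fin 4, (D.filter (fun p => (colorClass C c).Adj p.1 p.2)).card
        ≤ ∑ _c : Fin 4, 156 := Finset.sum_le_sum (fun c _ => hbound c)
      _ = 624 := by simp
  omega

/-- There is a 4-edge-colouring of `K₁₀` with no monochromatic copy of `P₅`;
consequently `R₄(P₅) ≥ 11`. -/
theorem pathRamsey_four_P5_lower :
    (∃ C : Sym2 (Fin 10) → Fin 4, ¬ HasMonoPath 5 C) ∧ 11 ≤ pathRamsey 4 5 := by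
  refine ⟨⟨C10, C10_noMono⟩, ?_⟩
  have h26 : (26 : ℕ) ∈ {n | ∀ C : Sym2 (Fin n) → Fin 4, HasMonoPath 5 C} := ramsey26
  apply le_csInf ⟨26, h26⟩
  intro n hn
  by_contra hlt
  push_neg at hlt
  have hn10 : n ≤ 10 := by omega
  set Cn : Sym2 (Fin n) → Fin 4 := fun e => C10 (e.map (Fin.castLE hn10)) with hCn
  obtain ⟨c, f, hinj, hadj⟩ := hn Cn
  apply C10_noMono
  refine ⟨c, Fin.castLE hn10 ∘ f, (Fin.castLE_injective hn10).comp hinj, ?_⟩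
  intro i j hij
  have h := hadj i j hij
  rw [colorClass, SimpleGraph.fromEdgeSet_adj] at h ⊢
  obtain ⟨hc, hne⟩ := h
  refine ⟨?_, fun hh => hne (Fin.castLE_injective hn10 hh)⟩
  have hc' : Cn s(f i, f j) = c := hc
  simpa [hCn, Sym2.map_pair_eq, Set.mem_setOf_eq] using hc'
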